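/- Every orientation-preserving rigid motion of ℝ³ arises from a dual quaternion: for every ℝ-linear isometry ρ of the three-dimensional real vector space of pure quaternions whose determinant equals 1, and for every pure quaternion b, there exist quaternions p, q with p ≠ 0 and pq̄ + qp̄ = 0 such that for every pure quaternion x one has (p x p̄ + p q̄ − q p̄)/N(p) = ρ(x) + b. In other words, the action homomorphism is surjective onto the group of Euclidean displacements. -/

import Mathlib

noncomputable section
open Polynomial

/-- The real quaternions ℍ. -/
abbrev Quat := Quaternion ℝ

/-- The dual quaternions 𝔻ℍ = ℍ ⊕ εℍ, realized as dual numbers over ℍ.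
An element is a pair `(p, q)` representing `p + εq`. -/
abbrev DQ := DualNumber Quat

/-- Conjugation of a dual quaternion `p + εq ↦ p̄ + εq̄`,
conjugating each quaternion part. -/
def dconj (h : DQ) : DQ := (star h.fst, star h.snd)

/-- The canonical ring homomorphism ℝ → 𝔻ℍ. -/
def realToDQ : ℝ →+* DQ := (TrivSqZeroExt.inlHom Quat Quat).comp (algebraMap ℝ Quat)

/-- Coefficientwise conjugate of a polynomial over 𝔻ℍ. -/
def pconj (C : DQ[X]) : DQ[X] := C.sum fun n a => Polynomial.C (dconj a) * X ^ n

/-- `C ∈ 𝔻ℍ[t]` is a motion polynomial if `C C̄ ∈ ℝ[t] \ {0}` and the leading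
coefficient of `C` is invertible. -/
def IsMotionPoly (C : DQ[X]) : Prop :=
  (∃ R : ℝ[X], R ≠ 0 ∧ C * pconj C = R.map realToDQ) ∧ IsUnit C.leadingCoeff

/-- The action of a dual quaternion `p + εq` (with `p ≠ 0` and satisfying the Study
condition) on a pure quaternion `x`:  `x ↦ (p x p̄ + p q̄ − q p̄)/N(p)`. -/
def act (p q x : Quat) : Quat :=
  (p * x * star p + p * star q - q * star p) * (p * star p)⁻¹

/-- The three-dimensional real vector space of pure quaternions, identified with ℝ³. -/
def PureQ : Submodule ℝ Quat where
  carrier := {x | x.re = 0}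
  add_mem' := by intro a b ha hb; simp_all [Set.mem_setOf_eq]
  zero_mem' := by simp; rfl
  smul_mem' := by intro c x hx; simp_all [Set.mem_setOf_eq]


set_option maxHeartbeats 1000000

open scoped RealInnerProductSpace
open Submodule

lemma pure_star {x : Quat} (hx : x.re = 0) : star x = -x := by
  ext <;> simp [hx]

lemma star_real_smul (r : ℝ) (x : Quat) : star (r • x) = r • star x := by
  ext <;> simp

lemma quat_conj_formula (v x : Quat) (hv : v.re = 0) (hx : x.re = 0) :
    v * x * v = (Quaternion.normSq v : ℝ) • x - (2 * (v * star x).re) • v := by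
  ext <;>
    simp [Quaternion.re_mul, Quaternion.imI_mul, Quaternion.imJ_mul, Quaternion.imK_mul,
      Quaternion.normSq_def', hv, hx] <;> ring

lemma reflection_eq_conj (v : PureQ) (hv : v ≠ 0) (y : PureQ) :
    ((reflection (ℝ ∙ v)ᗮ y : PureQ) : Quat)
      = (‖(v : Quat)‖⁻¹ • (v : Quat)) * y * (‖(v : Quat)‖⁻¹ • (v : Quat)) := by
  have hvq : (v : Quat) ≠ 0 := fun h => hv (Subtype.ext h)
  have hnv : ‖(v : Quat)‖ ≠ 0 := norm_ne_zero_iff.mpr hvq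
  have h1 : reflection (ℝ ∙ v)ᗮ y = y - ((2 * ⟪v, y⟫ / (‖v‖ ^ 2 : ℝ))) • v := by
    rw [reflection_orthogonal_apply, reflection_singleton_apply]
    match_scalars <;> field_simp <;> simp
  rw [h1]
  have hnorm : ‖v‖ = ‖(v : Quat)‖ := rfl
  have hinner : ⟪v, y⟫ = ((v : Quat) * star (y : Quat)).re := Quaternion.inner_def _ _
  push_cast
  rw [smul_mul_assoc, smul_mul_assoc, mul_smul_comm, smul_smul,
    quat_conj_formula _ _ v.2 y.2, hinner, hnorm]
  rw [Quaternion.normSq_eq_norm_mul_self]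
  match_scalars <;> field_simp <;> (try ring) <;> exact Or.inl trivial

lemma key_reflections (l : List PureQ) :
    ∃ (w : Quat) (ε : ℝ),
      ‖w‖ = 1 ∧
      LinearMap.det (((l.map fun v => reflection (ℝ ∙ v)ᗮ).prod :
          PureQ ≃ₗᵢ[ℝ] PureQ).toLinearEquiv : PureQ →ₗ[ℝ] PureQ) = ε ∧
      (∀ x : PureQ, (((l.map fun v => reflection (ℝ ∙ v)ᗮ).prod x : PureQ) : Quat)
          = ε • (w * x * star w)) := by
  induction l with
  | nil =>
    refine ⟨1, 1, by simp, ?_, ?_⟩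
    · simp only [List.map_nil, List.prod_nil]
      exact LinearMap.det_id
    · intro x
      simp [List.map_nil, List.prod_nil]
  | cons v L IH =>
    obtain ⟨w, ε, hw, hdet, happ⟩ := IH
    have hmul : ∀ (a b : PureQ ≃ₗᵢ[ℝ] PureQ) (x : PureQ), (a * b) x = a (b x) := fun _ _ _ => rfl
    have hdetmul : ∀ (a b : PureQ ≃ₗᵢ[ℝ] PureQ),
        LinearMap.det ((a * b).toLinearEquiv : PureQ →ₗ[ℝ] PureQ)
          = LinearMap.det (a.toLinearEquiv : PureQ →ₗ[ℝ] PureQ) *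
            LinearMap.det (b.toLinearEquiv : PureQ →ₗ[ℝ] PureQ) := by
      intro a b
      have h : ((a * b).toLinearEquiv : PureQ →ₗ[ℝ] PureQ)
          = (a.toLinearEquiv : PureQ →ₗ[ℝ] PureQ) ∘ₗ (b.toLinearEquiv : PureQ →ₗ[ℝ] PureQ) :=
        LinearMap.ext fun x => rfl
      rw [h]
      exact LinearMap.det_comp _ _
    by_cases hv : v = 0
    · refine ⟨w, ε, hw, ?_, ?_⟩
      · subst hv
        simp only [List.map_cons, List.prod_cons, hdetmul]
        rw [det_reflection]
        have : ((ℝ ∙ (0 : PureQ))ᗮ)ᗮ = (⊥ : Submodule ℝ PureQ) := by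
          rw [Submodule.orthogonal_orthogonal, Submodule.span_zero_singleton]
        rw [this]
        simp [hdet]
      · intro x
        subst hv
        simp only [List.map_cons, List.prod_cons, hmul]
        have hid : reflection ((ℝ ∙ (0 : PureQ))ᗮ) ((L.map fun v => reflection (ℝ ∙ v)ᗮ).prod x)
            = (L.map fun v => reflection (ℝ ∙ v)ᗮ).prod x := by
          apply reflection_mem_subspace_eq_self
          rw [Submodule.span_zero_singleton, Submodule.bot_orthogonal_eq_top]
          trivial
        rw [hid, happ]
    · set u : Quat := ‖(v : Quat)‖⁻¹ • (v : Quat) with hu_def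
      have hvq : (v : Quat) ≠ 0 := fun h => hv (Subtype.ext h)
      have hnv : ‖(v : Quat)‖ ≠ 0 := norm_ne_zero_iff.mpr hvq
      have hu_re : u.re = 0 := by rw [hu_def, Quaternion.re_smul, v.2, smul_zero]
      have hu_norm : ‖u‖ = 1 := by
        rw [hu_def, norm_smul]
        simp [abs_of_nonneg (inv_nonneg.mpr (norm_nonneg _)), inv_mul_cancel₀ hnv]
      refine ⟨u * w, -ε, ?_, ?_, ?_⟩
      · rw [norm_mul, hu_norm, hw, one_mul]
      · simp only [List.map_cons, List.prod_cons, hdetmul]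
        rw [det_reflection]
        have h1 : ((ℝ ∙ v)ᗮ)ᗮ = (ℝ ∙ v : Submodule ℝ PureQ) := Submodule.orthogonal_orthogonal _
        rw [h1, finrank_span_singleton hv, hdet]
        ring
      · intro x
        simp only [List.map_cons, List.prod_cons, hmul]
        rw [reflection_eq_conj v hv, happ]
        rw [star_mul, pure_star hu_re]
        simp only [mul_smul_comm, smul_mul_assoc, mul_neg, neg_mul, neg_smul, smul_neg,
          neg_neg, mul_assoc]
        rw [hu_def]
        simp only [smul_mul_assoc, mul_smul_comm, smul_smul]
        congr 1
        ring

/-- Surjectivity of the action homomorphism onto the Euclidean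
displacements: every orientation-preserving rigid motion `x ↦ ρ(x) + b` of the
pure quaternions (ρ a linear isometry of determinant 1, b a pure quaternion)
is the action of some dual quaternion `p + εq` with `p ≠ 0` satisfying the
Study condition. -/
theorem stmt3 (ρ : PureQ →ₗ[ℝ] PureQ) (hiso : ∀ x : PureQ, ‖ρ x‖ = ‖x‖)
    (hdet : LinearMap.det ρ = 1) (b : PureQ) :
    ∃ p q : Quat, p ≠ 0 ∧ p * star q + q * star p = 0 ∧
      ∀ x : PureQ, act p q (x : Quat) = (ρ x : Quat) + (b : Quat) := by
  classical
  let li : PureQ →ₗᵢ[ℝ] PureQ := ⟨ρ, hiso⟩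
  let φ : PureQ ≃ₗᵢ[ℝ] PureQ := li.toLinearIsometryEquiv rfl
  have hφ : ∀ x : PureQ, φ x = ρ x := fun x => li.toLinearIsometryEquiv_apply rfl x
  obtain ⟨l, -, hl⟩ := LinearIsometryEquiv.reflections_generate_dim φ
  obtain ⟨w, ε, hw, hdet', happ⟩ := key_reflections l
  rw [← hl] at hdet' happ
  have hmap : (φ.toLinearEquiv : PureQ →ₗ[ℝ] PureQ) = ρ := LinearMap.ext fun x => hφ x
  have hε : ε = 1 := by rw [← hdet', hmap, hdet]
  subst hε
  have hρw : ∀ x : PureQ, ((ρ x : Quat)) = w * x * star w := fun x => by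
    rw [← hφ, happ, one_smul]
  have hw0 : w ≠ 0 := by intro h; rw [h] at hw; simp at hw
  have hns : w * star w = 1 := by
    rw [Quaternion.self_mul_star, Quaternion.normSq_eq_norm_mul_self, hw, one_mul]
    exact Quaternion.coe_one
  set q : Quat := (-(2⁻¹ : ℝ)) • ((b : Quat) * w) with hq
  have hsq : star q = (2⁻¹ : ℝ) • (star w * (b : Quat)) := by
    rw [hq, star_real_smul, star_mul, pure_star b.2]
    simp
  have h1 : w * star q = (2⁻¹ : ℝ) • (b : Quat) := by
    rw [hsq, mul_smul_comm, ← mul_assoc, hns, one_mul]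
  have h2 : q * star w = (-(2⁻¹ : ℝ)) • (b : Quat) := by
    rw [hq, smul_mul_assoc, mul_assoc, hns, mul_one]
  refine ⟨w, q, hw0, by rw [h1, h2, ← add_smul]; norm_num, ?_⟩
  intro x
  show (w * x * star w + w * star q - q * star w) * (w * star w)⁻¹ = _
  rw [hns, inv_one, mul_one, h1, h2, ← hρw x, neg_smul, sub_neg_eq_add, add_assoc, ← add_smul]
  norm_num
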